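/- Fix h, δ > 0, Gaussian kernel K_h, and stabilized kernel regression T_D as above with loss L(a,y) = |a − y|. For i.i.d. data D = (Z₁,…,Zₙ), Zᵢ = (Xᵢ,Yᵢ), with E|Y₁| < ∞ and an independent copy Z = (X,Y), one has |E[L(T_{D_{(−i)}}(Xᵢ), Yᵢ)] − E[L(T_D(X), Y)]| ≤ C/√n for a constant C depending on h, δ, and E|Y₁|. -/

import Mathlib

open MeasureTheory Finset Real

lemma pi_map_eval {ι : Type} [Fintype ι] [DecidableEq ι] {β : ι → Type*}
    [∀ i, MeasurableSpace (β i)]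
    (μ : ∀ i, Measure (β i)) [∀ i, IsProbabilityMeasure (μ i)] (c : ι) :
    Measure.map (Function.eval c) (Measure.pi μ) = μ c := by
  ext s hs
  rw [Measure.map_apply (measurable_pi_apply c) hs, Set.eval_preimage, Measure.pi_pi]
  rw [Finset.prod_eq_single c (fun j _ hj => by simp [Function.update_of_ne hj])
    (by simp)]
  simp

lemma map_joint_eq_pi {Ω : Type} [MeasurableSpace Ω] (P : Measure Ω) [IsProbabilityMeasure P]
    {ι : Type} [Fintype ι] {β : Type} [MeasurableSpace β]
    (Z : ι → Ω → β) (hZ : ∀ i, Measurable (Z i))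
    (hind : ProbabilityTheory.iIndepFun Z P) :
    Measure.map (fun ω i => Z i ω) P = Measure.pi (fun i => Measure.map (Z i) P) := by
  haveI : ∀ i, IsProbabilityMeasure (Measure.map (Z i) P) :=
    fun i => Measure.isProbabilityMeasure_map (hZ i).aemeasurable
  refine (Measure.pi_eq fun s hs => ?_).symm
  rw [Measure.map_apply (measurable_pi_lambda _ fun i => hZ i) (MeasurableSet.univ_pi hs)]
  have hpre : (fun ω i => Z i ω) ⁻¹' Set.pi Set.univ s = ⋂ i ∈ Finset.univ, Z i ⁻¹' s i := by
    ext ω; simp [Set.mem_pi]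
  rw [hpre, hind.measure_inter_preimage_eq_mul Finset.univ (fun i _ => hs i)]
  exact Finset.prod_congr rfl fun i _ => (Measure.map_apply (hZ i) (hs i)).symm

lemma key_alg (a b k y N : ℝ) (hN : 0 < N) (hb : 0 ≤ b) (hk : 0 < k) (hk1 : k ≤ 1) :
    |a / (b + N) - (a + k * y) / (b + k + N)| ≤ |a| / N ^ 2 + |y| / N := by
  have hbN : 0 < b + N := by positivity
  have hbkN : 0 < b + k + N := by positivity
  have heq : a / (b + N) - (a + k * y) / (b + k + N)
      = (a * k - k * y * (b + N)) / ((b + N) * (b + k + N)) := by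
    field_simp; ring
  rw [heq, abs_div, abs_of_pos (show (0:ℝ) < (b + N) * (b + k + N) by positivity)]
  have h1 : |a * k - k * y * (b + N)| ≤ |a| * k + k * |y| * (b + N) := by
    calc |a * k - k * y * (b + N)| ≤ |a * k| + |k * y * (b + N)| := abs_sub _ _
    _ = |a| * k + k * |y| * (b + N) := by
        rw [abs_mul, abs_mul, abs_mul, abs_of_pos hk, abs_of_pos hbN]
  calc |a * k - k * y * (b + N)| / ((b + N) * (b + k + N))
      ≤ (|a| * k + k * |y| * (b + N)) / ((b + N) * (b + k + N)) := by gcongr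
    _ = |a| * k / ((b + N) * (b + k + N)) + k * |y| * (b + N) / ((b + k + N) * (b + N)) := by
        rw [add_div, mul_comm (b + N) (b + k + N)]
    _ = |a| * k / ((b + N) * (b + k + N)) + k * |y| / (b + k + N) := by
        rw [mul_div_mul_right _ _ hbN.ne']
    _ ≤ |a| * 1 / (N * N) + 1 * |y| / N := by
        gcongr
        · exact le_add_of_nonneg_left hb
        · nlinarith
        · nlinarith
    _ = |a| / N ^ 2 + |y| / N := by ring

theorem stabilized_kernel_regression_loo_bias
    (h δ : ℝ) (hh : 0 < h) (hδ : 0 < δ)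
    (μpair : Measure (ℝ × ℝ)) [IsProbabilityMeasure μpair]
    (hY : Integrable (fun p : ℝ × ℝ => |p.2|) μpair) :
    ∃ C > 0, ∀ (n : ℕ), 1 ≤ n →
      ∀ (Ω : Type) (_ : MeasurableSpace Ω) (P : Measure Ω), IsProbabilityMeasure P →
      ∀ (Z : Fin (n + 1) → Ω → ℝ × ℝ),
        (∀ j, Measurable (Z j)) →
        ProbabilityTheory.iIndepFun Z P →
        (∀ j, Measure.map (Z j) P = μpair) →
        ∀ i : Fin n,
        |(∫ ω, |(∑ j ∈ Finset.univ.erase i,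
              Real.exp (-(((Z i.castSucc ω).1 - (Z j.castSucc ω).1)^2) / (2 * h^2))
                * (Z j.castSucc ω).2) /
            ((∑ j ∈ Finset.univ.erase i,
              Real.exp (-(((Z i.castSucc ω).1 - (Z j.castSucc ω).1)^2) / (2 * h^2)))
              + n * δ)
            - (Z i.castSucc ω).2| ∂P)
          - (∫ ω, |(∑ j : Fin n,
              Real.exp (-(((Z (Fin.last n) ω).1 - (Z j.castSucc ω).1)^2) / (2 * h^2))
                * (Z j.castSucc ω).2) /
            ((∑ j : Fin n,
              Real.exp (-(((Z (Fin.last n) ω).1 - (Z j.castSucc ω).1)^2) / (2 * h^2)))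
              + n * δ)
            - (Z (Fin.last n) ω).2| ∂P)|
          ≤ C / Real.sqrt n := by
  classical
  set M := ∫ p, |p.2| ∂μpair with hM
  have hM0 : 0 ≤ M := integral_nonneg fun p => abs_nonneg _
  refine ⟨M / δ + M / δ ^ 2 + 1, by positivity, ?_⟩
  intro n hn Ω mΩ P hP Z hZ hind hlaw i
  haveI := hP
  have h1n : (1:ℝ) ≤ (n:ℝ) := by exact_mod_cast hn
  have hNpos : (0:ℝ) < (n:ℝ) * δ := mul_pos (by linarith) hδ
  -- kernel function
  set K : ℝ → ℝ → ℝ := fun x x' => Real.exp (-((x - x') ^ 2) / (2 * h ^ 2)) with hKdef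
  have hKpos : ∀ x x', 0 < K x x' := fun x x' => Real.exp_pos _
  have hK1 : ∀ x x', K x x' ≤ 1 := by
    intro x x'
    rw [hKdef]
    refine Real.exp_le_one_iff.mpr ?_
    apply div_nonpos_of_nonpos_of_nonneg
    · simp [sq_nonneg]
    · positivity
  -- product measure
  set ν : Measure (Fin (n + 1) → ℝ × ℝ) := Measure.pi (fun _ => μpair) with hνdef
  set F : Ω → (Fin (n + 1) → ℝ × ℝ) := fun ω j => Z j ω with hFdef
  have hF : Measurable F := measurable_pi_lambda _ fun j => hZ j
  have hmap : Measure.map F P = ν := by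
    rw [hFdef, map_joint_eq_pi P Z hZ hind, hνdef]
    exact congrArg Measure.pi (funext hlaw)
  -- the three functions
  set f₁ : (Fin (n + 1) → ℝ × ℝ) → ℝ := fun z =>
    |(∑ j ∈ Finset.univ.erase i, K (z i.castSucc).1 (z j.castSucc).1 * (z j.castSucc).2) /
      ((∑ j ∈ Finset.univ.erase i, K (z i.castSucc).1 (z j.castSucc).1) + (n:ℝ) * δ)
      - (z i.castSucc).2| with hf₁def
  set f₂ : (Fin (n + 1) → ℝ × ℝ) → ℝ := fun z =>
    |(∑ j : Fin n, K (z (Fin.last n)).1 (z j.castSucc).1 * (z j.castSucc).2) /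
      ((∑ j : Fin n, K (z (Fin.last n)).1 (z j.castSucc).1) + (n:ℝ) * δ)
      - (z (Fin.last n)).2| with hf₂def
  set f₃ : (Fin (n + 1) → ℝ × ℝ) → ℝ := fun z =>
    |(∑ j ∈ Finset.univ.erase i, K (z (Fin.last n)).1 (z j.castSucc).1 * (z j.castSucc).2) /
      ((∑ j ∈ Finset.univ.erase i, K (z (Fin.last n)).1 (z j.castSucc).1) + (n:ℝ) * δ)
      - (z (Fin.last n)).2| with hf₃def
  -- measurability
  have measK : ∀ c c' : Fin (n + 1),
      Measurable (fun z : Fin (n + 1) → ℝ × ℝ => K (z c).1 (z c').1) := by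
    intro c c'
    rw [hKdef]
    exact (((((measurable_pi_apply c).fst.sub
      (measurable_pi_apply c').fst).pow_const 2).neg).div_const _).exp
  have measY : ∀ c : Fin (n + 1),
      Measurable (fun z : Fin (n + 1) → ℝ × ℝ => (z c).2) :=
    fun c => (measurable_pi_apply c).snd
  have hf₁m : Measurable f₁ := by
    rw [hf₁def]
    exact (((Finset.measurable_sum _ fun j _ => (measK _ _).mul (measY j.castSucc)).div
      ((Finset.measurable_sum _ fun j _ => measK _ _).add_const _)).sub
      (measY i.castSucc)).abs
  have hf₂m : Measurable f₂ := by
    rw [hf₂def]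
    exact (((Finset.measurable_sum _ fun j _ => (measK _ _).mul (measY j.castSucc)).div
      ((Finset.measurable_sum _ fun j _ => measK _ _).add_const _)).sub
      (measY (Fin.last n))).abs
  have hf₃m : Measurable f₃ := by
    rw [hf₃def]
    exact (((Finset.measurable_sum _ fun j _ => (measK _ _).mul (measY j.castSucc)).div
      ((Finset.measurable_sum _ fun j _ => measK _ _).add_const _)).sub
      (measY (Fin.last n))).abs
  -- coordinate integrability and integrals
  have hYc : ∀ c : Fin (n + 1),
      Integrable (fun z : Fin (n + 1) → ℝ × ℝ => |(z c).2|) ν := by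
    intro c
    have hmapc : Measure.map (Function.eval c) ν = μpair := pi_map_eval _ c
    have := (integrable_map_measure measurable_snd.abs.aestronglyMeasurable
      (measurable_pi_apply c).aemeasurable).mp (by rw [hmapc]; exact hY)
    exact this
  have hIc : ∀ c : Fin (n + 1), ∫ z, |(z c).2| ∂ν = M := by
    intro c
    rw [hM, ← pi_map_eval (fun _ : Fin (n + 1) => μpair) c,
      integral_map (measurable_pi_apply c).aemeasurable
        measurable_snd.abs.aestronglyMeasurable]
  -- generic numerator bound
  have habs_num : ∀ (x : ℝ) (s : Finset (Fin n)) (z : Fin (n+1) → ℝ × ℝ),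
      |∑ j ∈ s, K x (z j.castSucc).1 * (z j.castSucc).2| ≤ ∑ j ∈ s, |(z j.castSucc).2| := by
    intro x s z
    refine (Finset.abs_sum_le_sum_abs _ _).trans (Finset.sum_le_sum fun j _ => ?_)
    rw [abs_mul, abs_of_pos (hKpos _ _)]
    exact mul_le_of_le_one_left (abs_nonneg _) (hK1 _ _)
  have hTbound : ∀ (s : Finset (Fin n)) (x y : ℝ) (z : Fin (n+1) → ℝ × ℝ),
      |(∑ j ∈ s, K x (z j.castSucc).1 * (z j.castSucc).2) /
        ((∑ j ∈ s, K x (z j.castSucc).1) + (n:ℝ) * δ) - y|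
      ≤ (∑ j ∈ s, |(z j.castSucc).2|) / ((n:ℝ) * δ) + |y| := by
    intro s x y z
    have hB : 0 ≤ ∑ j ∈ s, K x (z j.castSucc).1 :=
      Finset.sum_nonneg fun j _ => (hKpos _ _).le
    refine (abs_sub _ _).trans (add_le_add ?_ le_rfl)
    rw [abs_div, abs_of_pos
      (show (0:ℝ) < (∑ j ∈ s, K x (z j.castSucc).1) + (n:ℝ) * δ by linarith)]
    exact div_le_div₀ (Finset.sum_nonneg fun j _ => abs_nonneg _) (habs_num x s z) hNpos
      (le_add_of_nonneg_left hB)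
  -- integrability of f₂ and f₃
  have hf₂i : Integrable f₂ ν := by
    refine Integrable.mono'
      (((integrable_finset_sum Finset.univ fun (j : Fin n) _ => hYc j.castSucc).div_const
        ((n:ℝ) * δ)).add (hYc (Fin.last n)))
      hf₂m.aestronglyMeasurable (Filter.Eventually.of_forall fun z => ?_)
    rw [hf₂def]
    simp only [Real.norm_eq_abs, abs_abs]
    exact hTbound Finset.univ _ _ z
  have hf₃i : Integrable f₃ ν := by
    refine Integrable.mono'
      (((integrable_finset_sum (Finset.univ.erase i) fun (j : Fin n) _ => hYc j.castSucc).div_const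
        ((n:ℝ) * δ)).add (hYc (Fin.last n)))
      hf₃m.aestronglyMeasurable (Filter.Eventually.of_forall fun z => ?_)
    rw [hf₃def]
    simp only [Real.norm_eq_abs, abs_abs]
    exact hTbound (Finset.univ.erase i) _ _ z
  -- exchangeability: swap coordinates i.castSucc and last
  have hswap : ∫ z, f₁ z ∂ν = ∫ z, f₃ z ∂ν := by
    set e : Fin (n+1) ≃ Fin (n+1) := Equiv.swap i.castSucc (Fin.last n) with hedef
    have hmp := MeasureTheory.measurePreserving_piCongrLeft
      (μ := fun _ : Fin (n+1) => μpair) e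
    rw [← hmp.integral_comp' f₁]
    refine integral_congr_ae (Filter.Eventually.of_forall fun z => ?_)
    set g := MeasurableEquiv.piCongrLeft (fun _ : Fin (n+1) => ℝ × ℝ) e with hgdef
    have happ : ∀ c, g z (e c) = z c := fun c =>
      MeasurableEquiv.piCongrLeft_apply_apply (β := fun _ : Fin (n+1) => ℝ × ℝ) e z c
    have h1 : g z i.castSucc = z (Fin.last n) := by
      have := happ (Fin.last n)
      rwa [hedef, Equiv.swap_apply_right] at this
    have h2 : ∀ j : Fin n, j ∈ Finset.univ.erase i → g z j.castSucc = z j.castSucc := by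
      intro j hj
      have hne : j.castSucc ≠ i.castSucc := by
        simp only [Finset.mem_erase] at hj
        exact fun hc => hj.1 (Fin.castSucc_injective n hc)
      have hne' : j.castSucc ≠ Fin.last n := (Fin.castSucc_lt_last j).ne
      have := happ j.castSucc
      rwa [hedef, Equiv.swap_apply_of_ne_of_ne hne hne'] at this
    have hsum1 : ∑ j ∈ Finset.univ.erase i,
        K (g z i.castSucc).1 (g z j.castSucc).1 * (g z j.castSucc).2
        = ∑ j ∈ Finset.univ.erase i,
          K (z (Fin.last n)).1 (z j.castSucc).1 * (z j.castSucc).2 :=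
      Finset.sum_congr rfl fun j hj => by rw [h1, h2 j hj]
    have hsum2 : ∑ j ∈ Finset.univ.erase i, K (g z i.castSucc).1 (g z j.castSucc).1
        = ∑ j ∈ Finset.univ.erase i, K (z (Fin.last n)).1 (z j.castSucc).1 :=
      Finset.sum_congr rfl fun j hj => by rw [h1, h2 j hj]
    show f₁ (g z) = f₃ z
    rw [hf₁def, hf₃def]
    simp only
    rw [hsum1, hsum2, h1]
  -- pointwise difference bound
  have hdiff : ∀ z : Fin (n+1) → ℝ × ℝ, |f₃ z - f₂ z| ≤
      (∑ j ∈ Finset.univ.erase i, |(z j.castSucc).2|) / ((n:ℝ) * δ)^2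
        + |(z i.castSucc).2| / ((n:ℝ) * δ) := by
    intro z
    rw [hf₂def, hf₃def]
    simp only
    have hnum : ∑ j : Fin n, K (z (Fin.last n)).1 (z j.castSucc).1 * (z j.castSucc).2
        = (∑ j ∈ Finset.univ.erase i, K (z (Fin.last n)).1 (z j.castSucc).1 * (z j.castSucc).2)
          + K (z (Fin.last n)).1 (z i.castSucc).1 * (z i.castSucc).2 :=
      (Finset.sum_erase_add _ _ (Finset.mem_univ i)).symm
    have hden : ∑ j : Fin n, K (z (Fin.last n)).1 (z j.castSucc).1
        = (∑ j ∈ Finset.univ.erase i, K (z (Fin.last n)).1 (z j.castSucc).1)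
          + K (z (Fin.last n)).1 (z i.castSucc).1 :=
      (Finset.sum_erase_add _ _ (Finset.mem_univ i)).symm
    rw [hnum, hden]
    have hb : 0 ≤ ∑ j ∈ Finset.univ.erase i, K (z (Fin.last n)).1 (z j.castSucc).1 :=
      Finset.sum_nonneg fun j _ => (hKpos _ _).le
    refine (abs_abs_sub_abs_le_abs_sub _ _).trans ?_
    rw [sub_sub_sub_cancel_right]
    refine (key_alg _ _ _ _ _ hNpos hb (hKpos _ _) (hK1 _ _)).trans ?_
    gcongr
    exact habs_num _ _ z
  -- integral of the bound
  have hφi : Integrable (fun z : Fin (n+1) → ℝ × ℝ =>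
      (∑ j ∈ Finset.univ.erase i, |(z j.castSucc).2|) / ((n:ℝ) * δ)^2
        + |(z i.castSucc).2| / ((n:ℝ) * δ)) ν :=
    ((integrable_finset_sum _ fun j _ => hYc j.castSucc).div_const _).add
      ((hYc i.castSucc).div_const _)
  have hintφ : ∫ z, ((∑ j ∈ Finset.univ.erase i, |(z j.castSucc).2|) / ((n:ℝ) * δ)^2
      + |(z i.castSucc).2| / ((n:ℝ) * δ)) ∂ν
      = ((Finset.univ.erase i).card : ℝ) * M / ((n:ℝ) * δ)^2 + M / ((n:ℝ) * δ) := by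
    rw [integral_add ((integrable_finset_sum _ fun j _ => hYc j.castSucc).div_const _)
      ((hYc i.castSucc).div_const _), integral_div, integral_div,
      integral_finset_sum _ fun j _ => hYc j.castSucc, hIc i.castSucc]
    have : ∀ j ∈ Finset.univ.erase i, (∫ z : Fin (n+1) → ℝ × ℝ, |(z j.castSucc).2| ∂ν) = M :=
      fun j _ => hIc j.castSucc
    rw [Finset.sum_congr rfl this, Finset.sum_const, nsmul_eq_mul]
  -- numeric facts
  have hn0 : (0:ℝ) < (n:ℝ) := by linarith
  have hs0 : 0 < Real.sqrt (n:ℝ) := Real.sqrt_pos.mpr hn0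
  have hsn : Real.sqrt (n:ℝ) ≤ (n:ℝ) := by
    nlinarith [Real.sq_sqrt (show (0:ℝ) ≤ (n:ℝ) by linarith), Real.sqrt_nonneg (n:ℝ)]
  have hcard : ((Finset.univ.erase i).card : ℝ) ≤ (n:ℝ) := by
    have h1 : (Finset.univ.erase i).card ≤ (Finset.univ : Finset (Fin n)).card :=
      Finset.card_erase_le
    have h2 : (Finset.univ : Finset (Fin n)).card = n := by simp
    exact_mod_cast h1.trans_eq h2
  -- main estimate on the product space
  have main : |(∫ z, f₁ z ∂ν) - ∫ z, f₂ z ∂ν| ≤ (M/δ + M/δ^2 + 1) / Real.sqrt (n:ℝ) := by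
    rw [hswap, ← integral_sub hf₃i hf₂i]
    calc |∫ z, (f₃ z - f₂ z) ∂ν| ≤ ∫ z, |f₃ z - f₂ z| ∂ν := by
          simpa [Real.norm_eq_abs] using
            norm_integral_le_integral_norm (μ := ν) (fun z => f₃ z - f₂ z)
      _ ≤ ∫ z, ((∑ j ∈ Finset.univ.erase i, |(z j.castSucc).2|) / ((n:ℝ) * δ)^2
            + |(z i.castSucc).2| / ((n:ℝ) * δ)) ∂ν :=
          integral_mono (hf₃i.sub hf₂i).abs hφi hdiff
      _ = ((Finset.univ.erase i).card : ℝ) * M / ((n:ℝ) * δ)^2 + M / ((n:ℝ) * δ) := hintφ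
      _ ≤ (n:ℝ) * M / ((n:ℝ) * δ)^2 + M / ((n:ℝ) * δ) := by gcongr
      _ = (M/δ^2 + M/δ) / (n:ℝ) := by field_simp
      _ ≤ (M/δ + M/δ^2 + 1) / (n:ℝ) := by gcongr ?_ / _; linarith
      _ ≤ (M/δ + M/δ^2 + 1) / Real.sqrt (n:ℝ) := by
          gcongr
  -- transfer to Ω
  have hP1 : (∫ ω, f₁ (F ω) ∂P) = ∫ z, f₁ z ∂ν := by
    rw [← hmap, integral_map hF.aemeasurable hf₁m.aestronglyMeasurable]
  have hP2 : (∫ ω, f₂ (F ω) ∂P) = ∫ z, f₂ z ∂ν := by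
    rw [← hmap, integral_map hF.aemeasurable hf₂m.aestronglyMeasurable]
  rw [← hP1, ← hP2] at main
  exact main
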